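/- Let m, r, d be integers with 2 ≤ r ≤ m, d ≥ 2, and d^r ≤ q + 1. Define T_r(d) := (d-1)·q^{m-1} + q^{m-r} + p_{m-2} (the Tsfasman–Boguslavsky bound) and C_r(d) := d^r·(p_{m-r} - p_{m-2r}) + p_{m-2r} (Couvreur's bound for an equidimensional variety in P^m of dimension m - r and degree d^r). Then C_r(d) ≤ (q^{m-r+2} + q^{m-r+1} - q^{m-2r+2} - 1)/(q - 1) and C_r(d) ≤ T_r(d). -/

import Mathlib

/-- `pj q j` is `p_j = q^j + q^(j-1) + ... + q + 1` for `j ≥ 0` and `p_j = 0` for `j < 0`. -/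
def pj (q : ℕ) (j : ℤ) : ℕ := if 0 ≤ j then ∑ i ∈ Finset.range (j.toNat + 1), q ^ i else 0

lemma pj_cast (q : ℕ) (hq : 2 ≤ q) (n : ℕ) :
    (pj q (n : ℤ) : ℚ) = ((q : ℚ) ^ (n + 1) - 1) / ((q : ℚ) - 1) := by
  have hq1 : (q : ℚ) ≠ 1 := by
    have : (2:ℚ) ≤ q := by exact_mod_cast hq
    linarith
  rw [pj, if_pos (by positivity), Int.toNat_natCast]
  push_cast
  rw [geom_sum_eq hq1]

lemma pj_neg (q : ℕ) (j : ℤ) (h : j < 0) : pj q j = 0 := by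
  rw [pj, if_neg (by omega)]

set_option maxHeartbeats 1000000

/-- For `2 ≤ r ≤ m`, `d ≥ 2` and `d^r ≤ q + 1`, Couvreur's bound
`C_r(d) = d^r⬝(p_{m-r} - p_{m-2r}) + p_{m-2r}` satisfies
`C_r(d) ≤ (q^(m-r+2) + q^(m-r+1) - q^(m-2r+2) - 1)/(q - 1)` and `C_r(d) ≤ T_r(d)`, where
`T_r(d) = (d-1)⬝q^(m-1) + q^(m-r) + p_{m-2}` is the Tsfasman–Boguslavsky bound.
(Possibly negative exponents of `q` are interpreted via `zpow` in `ℚ`.) -/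
theorem stmt_17 (q : ℕ) (hq : IsPrimePow q) (m r d : ℕ)
    (hr : 2 ≤ r) (hrm : r ≤ m) (hd : 2 ≤ d) (hdr : d ^ r ≤ q + 1)
    (Cr : ℚ)
    (hCr : Cr = (d : ℚ) ^ r *
        ((pj q ((m : ℤ) - r) : ℚ) - (pj q ((m : ℤ) - 2 * r) : ℚ))
      + (pj q ((m : ℤ) - 2 * r) : ℚ)) :
    Cr ≤ ((q : ℚ) ^ ((m : ℤ) - r + 2) + (q : ℚ) ^ ((m : ℤ) - r + 1)
        - (q : ℚ) ^ ((m : ℤ) - 2 * r + 2) - 1) / ((q : ℚ) - 1) ∧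
    Cr ≤ ((d : ℚ) - 1) * (q : ℚ) ^ (m - 1) + (q : ℚ) ^ (m - r) + pj q ((m : ℤ) - 2) := by
  have hq2 : 2 ≤ q := hq.two_le
  have hq2' : (2:ℚ) ≤ q := by exact_mod_cast hq2
  have hqpos : (0:ℚ) < (q:ℚ) - 1 := by linarith
  have hq1 : (1:ℚ) ≤ q := by linarith
  have hdQ : (d:ℚ)^r ≤ (q:ℚ) + 1 := by exact_mod_cast hdr
  have hdQ0 : (1:ℚ) ≤ (d:ℚ)^r := one_le_pow₀ (by exact_mod_cast hd.trans' one_le_two)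
  have hd2 : (2:ℚ) ≤ d := by exact_mod_cast hd
  obtain ⟨k, rfl⟩ : ∃ k, m = r + k := ⟨m - r, by omega⟩
  have e1 : ((r+k:ℕ):ℤ) - r = ((k:ℕ):ℤ) := by push_cast; ring
  have e2 : ((r+k:ℕ):ℤ) - r + 2 = ((k+2:ℕ):ℤ) := by push_cast; ring
  have e3 : ((r+k:ℕ):ℤ) - r + 1 = ((k+1:ℕ):ℤ) := by push_cast; ring
  have e4 : ((r+k:ℕ):ℤ) - 2 = ((r+k-2:ℕ):ℤ) := by
    have : 2 ≤ r + k := by omega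
    push_cast [this]; omega
  have e5 : (r+k) - 1 = (r-1) + k := by omega
  have e6 : (r+k) - r = k := by omega
  rw [e1, pj_cast q hq2] at hCr
  rw [e2, e3, e4, e5, e6, zpow_natCast, zpow_natCast, pj_cast q hq2]
  have hrk2 : r + k - 2 + 1 = (r-1) + k := by omega
  rw [hrk2]
  set E : ℚ := (q:ℚ)^((r-1)+k) with hEdef
  have hE1 : (1:ℚ) ≤ E := one_le_pow₀ hq1
  rcases le_or_gt r k with hcase | hcase
  · -- m ≥ 2r
    obtain ⟨t, rfl⟩ : ∃ t, k = r + t := ⟨k - r, by omega⟩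
    have f1 : ((r+(r+t):ℕ):ℤ) - 2*r = ((t:ℕ):ℤ) := by push_cast; ring
    have f2 : ((r+(r+t):ℕ):ℤ) - 2*r + 2 = ((t+2:ℕ):ℤ) := by push_cast; ring
    rw [f1, pj_cast q hq2] at hCr
    rw [f2, zpow_natCast]
    set A : ℚ := (q:ℚ)^(r+t+1) with hA
    set B : ℚ := (q:ℚ)^(t+1) with hB
    have hBA : B ≤ A := pow_le_pow_right₀ hq1 (by omega)
    have hB1 : (1:ℚ) ≤ B := one_le_pow₀ hq1
    have hA2 : (q:ℚ)^(r+t+2) = A * q := by rw [hA, pow_succ]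
    have hB2 : (q:ℚ)^(t+2) = B * q := by rw [hB, pow_succ]
    have hCr' : Cr * ((q:ℚ) - 1) = (d:ℚ)^r * (A - B) + (B - 1) := by
      rw [hCr]; field_simp; ring
    have key1 : Cr * ((q:ℚ) - 1) ≤ (q:ℚ)*A + A - (q:ℚ)*B - 1 := by
      rw [hCr']
      nlinarith [mul_le_mul_of_nonneg_right hdQ (by linarith : (0:ℚ) ≤ A - B)]
    constructor
    · rw [le_div_iff₀ hqpos, hA2, hB2]
      linarith [key1]
    · -- second bound
      have g1 : A * (q:ℚ) = B * (q:ℚ) * (q:ℚ)^r := by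
        rw [hA, hB, ← pow_succ, ← pow_succ, ← pow_add]
        congr 1; omega
      have g2 : E * (q:ℚ) = (q:ℚ)^(r+t) * (q:ℚ)^r := by
        rw [hEdef, ← pow_succ, ← pow_add]
        congr 1; omega
      have hdE : E * ((q:ℚ)-1) ≤ ((d:ℚ)-1)*E*((q:ℚ)-1) := by
        nlinarith [mul_nonneg (mul_nonneg (by linarith : (0:ℚ) ≤ (d:ℚ)-2)
          (by linarith : (0:ℚ) ≤ E)) (le_of_lt hqpos)]
      have hkey : B * (q:ℚ) ≤ (q:ℚ)^(r+t) := by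
        rw [← hB2]; exact pow_le_pow_right₀ hq1 (by omega)
      have hAq : A = (q:ℚ)^(r+t) * q := by rw [hA, pow_succ]
      have hqr1 : (1:ℚ) ≤ (q:ℚ)^r := one_le_pow₀ hq1
      have expand : ((d:ℚ)-1)*E + (q:ℚ)^(r+t) + (E-1)/((q:ℚ)-1)
          = (((d:ℚ)-1)*E*((q:ℚ)-1) + (q:ℚ)^(r+t)*((q:ℚ)-1) + E - 1) / ((q:ℚ)-1) := by
        field_simp; ring
      rw [expand, le_div_iff₀ hqpos]
      have h2 : (q:ℚ)*A + A - (q:ℚ)*B - 1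
          ≤ ((d:ℚ)-1)*E*((q:ℚ)-1) + (q:ℚ)^(r+t)*((q:ℚ)-1) + E - 1 := by
        have p1 : B * (q:ℚ) * ((q:ℚ)^r - 1) ≤ (q:ℚ)^(r+t) * ((q:ℚ)^r - 1) :=
          mul_le_mul_of_nonneg_right hkey (by linarith : (0:ℚ) ≤ (q:ℚ)^r - 1)
        nlinarith [p1, g1, g2, hdE, hAq]
      linarith [key1]
  · -- m < 2r
    have f1 : pj q (((r+k:ℕ):ℤ) - 2*r) = 0 := pj_neg _ _ (by push_cast; omega)
    rw [f1] at hCr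
    push_cast at hCr
    have hz : ((r+k:ℕ):ℤ) - 2*r + 2 ≤ 1 := by push_cast; omega
    have hzle : (q:ℚ)^(((r+k:ℕ):ℤ) - 2*r + 2) ≤ (q:ℚ)^(1:ℤ) :=
      zpow_le_zpow_right₀ hq1 hz
    rw [zpow_one] at hzle
    have hzpos : (0:ℚ) < (q:ℚ)^(((r+k:ℕ):ℤ) - 2*r + 2) := zpow_pos (by linarith) _
    set A : ℚ := (q:ℚ)^(k+1) with hA
    have hA1 : (1:ℚ) ≤ A := one_le_pow₀ hq1
    have hCr' : Cr * ((q:ℚ) - 1) = (d:ℚ)^r * (A - 1) := by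
      rw [hCr]; field_simp; ring
    have key1 : Cr * ((q:ℚ) - 1) ≤ (q:ℚ)*A + A - (q:ℚ) - 1 := by
      rw [hCr']
      nlinarith [mul_le_mul_of_nonneg_right hdQ (by linarith : (0:ℚ) ≤ A - 1)]
    have hA2 : (q:ℚ)^(k+2) = A * q := by rw [hA, pow_succ]
    constructor
    · rw [le_div_iff₀ hqpos, hA2]
      linarith [key1]
    · have expand : ((d:ℚ)-1)*E + (q:ℚ)^k + (E-1)/((q:ℚ)-1)
          = (((d:ℚ)-1)*E*((q:ℚ)-1) + (q:ℚ)^k*((q:ℚ)-1) + E - 1) / ((q:ℚ)-1) := by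
        field_simp; ring
      rw [expand, le_div_iff₀ hqpos]
      have hkA : (q:ℚ)^k ≤ A := pow_le_pow_right₀ hq1 (by omega)
      have hkq : A = (q:ℚ)^k * q := by rw [hA, pow_succ]
      have hdE : E*((q:ℚ)-1) ≤ ((d:ℚ)-1)*E*((q:ℚ)-1) := by
        nlinarith [mul_nonneg (mul_nonneg (by linarith : (0:ℚ) ≤ (d:ℚ)-2)
          (by linarith : (0:ℚ) ≤ E)) (le_of_lt hqpos)]
      have h2 : (q:ℚ)*A + A - (q:ℚ) - 1
          ≤ ((d:ℚ)-1)*E*((q:ℚ)-1) + (q:ℚ)^k*((q:ℚ)-1) + E - 1 := by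
        rcases Nat.lt_or_ge r 3 with h3 | h3
        · -- r = 2, k ≤ 1
          have hr2 : r = 2 := by omega
          have hEA : E = A := by rw [hEdef, hA]; congr 1; omega
          have hk1 : (q:ℚ)^k ≤ (q:ℚ) := by
            calc (q:ℚ)^k ≤ (q:ℚ)^1 := pow_le_pow_right₀ hq1 (by omega)
            _ = q := pow_one _
          nlinarith
        · -- r ≥ 3
          have hEA : A * (q:ℚ) ≤ E := by
            rw [hA, hEdef, ← pow_succ]
            exact pow_le_pow_right₀ hq1 (by omega)
          have hA0 : (0:ℚ) < A := by linarith
          have h4 : A * (q:ℚ) * (q:ℚ) ≤ E * (q:ℚ) :=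
            mul_le_mul_of_nonneg_right hEA (by linarith)
          have h5 : A * (q:ℚ) * 2 ≤ A * (q:ℚ) * (q:ℚ) :=
            mul_le_mul_of_nonneg_left hq2' (by positivity)
          have h6 : A ≤ A * (q:ℚ) := le_mul_of_one_le_right (by positivity) hq1
          have h7 : (q:ℚ)^k ≤ (q:ℚ)^k * (q:ℚ) := le_mul_of_one_le_right (by positivity) hq1
          linarith [h4, h5, h6, h7, hdE]
      linarith [key1]
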